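/- arXiv:2003.12201 — 3 statements merged into one kernel-verified Lean document; each statement's English description precedes it below -/
import Mathlib

section
/- For prime d, if a complete set of d²+1 mutually unbiased bases of ℂ^d ⊗ ℂ^d contains d+1 bases consisting entirely of product states, then it contains at least d(d−1) = (d²+1) − (d+1) bases that do not consist of product states. -/
open Matrix Complex Finset

/-- A vector of `ℂ^d ⊗ ℂ^d` (realized as `Fin d × Fin d → ℂ`) is a product state. -/
def IsProductState (d : ℕ) (v : Fin d × Fin d → ℂ) : Prop :=
  ∃ a b : Fin d → ℂ, ∀ p : Fin d × Fin d, v p = a p.1 * b p.2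

namespace MUBProof

noncomputable def ip {α : Type*} [Fintype α] (f g : α → ℂ) : ℂ :=
  ∑ x, (starRingEnd ℂ) (f x) * g x

lemma ip_conj_symm {α : Type*} [Fintype α] (f g : α → ℂ) :
    (starRingEnd ℂ) (ip f g) = ip g f := by
  simp [ip, map_sum, mul_comm]

lemma ip_re_eq {α : Type*} [Fintype α] (f : α → ℂ) :
    ip f f = ((∑ x, Complex.normSq (f x) : ℝ) : ℂ) := by
  simp only [ip]
  push_cast
  refine Finset.sum_congr rfl fun x _ => ?_
  rw [mul_comm, Complex.mul_conj]

lemma ip_re_nonneg {α : Type*} [Fintype α] (f : α → ℂ) : 0 ≤ (ip f f).re := by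
  rw [ip_re_eq]
  simp only [Complex.ofReal_re]
  exact Finset.sum_nonneg fun x _ => Complex.normSq_nonneg _

lemma ip_sum_right {α ι : Type*} [Fintype α] [Fintype ι] (c : ι → ℂ) (g : ι → α → ℂ)
    (f : α → ℂ) : ip f (fun x => ∑ v, c v * g v x) = ∑ v, c v * ip f (g v) := by
  simp only [ip, Finset.mul_sum]
  rw [Finset.sum_comm]
  refine Finset.sum_congr rfl fun v _ => Finset.sum_congr rfl fun x _ => by ring

lemma ip_sum_left {α ι : Type*} [Fintype α] [Fintype ι] (c : ι → ℂ) (g : ι → α → ℂ)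
    (f : α → ℂ) : ip (fun x => ∑ v, c v * g v x) f
      = ∑ v, (starRingEnd ℂ) (c v) * ip (g v) f := by
  simp only [ip, map_sum, _root_.map_mul, Finset.sum_mul]
  rw [Finset.sum_comm]
  refine Finset.sum_congr rfl fun v _ => ?_
  rw [Finset.mul_sum]
  exact Finset.sum_congr rfl fun x _ => by ring

lemma ip_sum_right' {α ι : Type*} [Fintype α] [Fintype ι] (g : ι → α → ℂ)
    (f : α → ℂ) : ip f (fun x => ∑ v, g v x) = ∑ v, ip f (g v) := by
  simp only [ip, Finset.mul_sum]
  rw [Finset.sum_comm]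

lemma ip_sum_left' {α ι : Type*} [Fintype α] [Fintype ι] (g : ι → α → ℂ)
    (f : α → ℂ) : ip (fun x => ∑ v, g v x) f = ∑ v, ip (g v) f := by
  simp only [ip, map_sum, Finset.sum_mul]
  rw [Finset.sum_comm]

lemma ip_add_right {α : Type*} [Fintype α] (f g h : α → ℂ) :
    ip f (fun x => g x + h x) = ip f g + ip f h := by
  simp [ip, mul_add, Finset.sum_add_distrib]

lemma ip_add_left {α : Type*} [Fintype α] (f g h : α → ℂ) :
    ip (fun x => f x + g x) h = ip f h + ip g h := by
  simp [ip, add_mul, Finset.sum_add_distrib]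

lemma ip_sub_left {α : Type*} [Fintype α] (f g h : α → ℂ) :
    ip (fun x => f x - g x) h = ip f h - ip g h := by
  simp [ip, sub_mul, Finset.sum_sub_distrib]

lemma ip_sub_right {α : Type*} [Fintype α] (f g h : α → ℂ) :
    ip f (fun x => g x - h x) = ip f g - ip f h := by
  simp [ip, mul_sub, Finset.sum_sub_distrib]

lemma ip_smul_right {α : Type*} [Fintype α] (c : ℂ) (f g : α → ℂ) :
    ip f (fun x => c * g x) = c * ip f g := by
  simp only [ip, Finset.mul_sum]
  exact Finset.sum_congr rfl fun x _ => by ring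

lemma ip_smul_left {α : Type*} [Fintype α] (c : ℂ) (f g : α → ℂ) :
    ip (fun x => c * f x) g = (starRingEnd ℂ) c * ip f g := by
  simp only [ip, _root_.map_mul, Finset.mul_sum]
  exact Finset.sum_congr rfl fun x _ => by ring

/-- outer product of two vectors, as a function on pairs -/
noncomputable def outer {α : Type*} (u w : α → ℂ) : α × α → ℂ :=
  fun pq => u pq.1 * (starRingEnd ℂ) (w pq.2)

lemma ip_outer_outer {α : Type*} [Fintype α] (u w u' w' : α → ℂ) :
    ip (outer u w) (outer u' w') = ip u u' * (starRingEnd ℂ) (ip w w') := by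
  have h1 : (starRingEnd ℂ) (ip w w') = ∑ q, w q * (starRingEnd ℂ) (w' q) := by
    simp [ip, map_sum, _root_.map_mul, mul_comm]
  rw [h1, ip, ip, Finset.sum_mul_sum]
  simp only [ip, outer, Fintype.sum_prod_type, _root_.map_mul, RingHomInvPair.comp_apply_eq]
  exact Finset.sum_congr rfl fun x _ => Finset.sum_congr rfl fun y _ => by ring

noncomputable def basisVec {α : Type*} [DecidableEq α] (p : α) : α → ℂ :=
  fun q => if q = p then 1 else 0

lemma ip_basis_basis {α : Type*} [Fintype α] [DecidableEq α] (p q : α) :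
    ip (basisVec p) (basisVec q) = if p = q then 1 else 0 := by
  simp only [ip, basisVec]
  rw [Finset.sum_eq_single p]
  · simp [eq_comm]
  · intro b _ hb; simp [hb]
  · simp

lemma ip_vec_basis {α : Type*} [Fintype α] [DecidableEq α] (v : α → ℂ) (p : α) :
    ip v (basisVec p) = (starRingEnd ℂ) (v p) := by
  simp only [ip, basisVec, mul_ite, mul_one, mul_zero]
  rw [Finset.sum_eq_single p]
  · simp
  · intro b _ hb; simp [hb]
  · simp

section Dim

variable (d : ℕ)

noncomputable def Pf (v : Fin d × Fin d → ℂ) : (Fin d × Fin d) × (Fin d × Fin d) → ℂ :=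
  outer v v

noncomputable def XF (x y : Fin d) : (Fin d × Fin d) × (Fin d × Fin d) → ℂ :=
  fun pq => ∑ z, outer (basisVec ((x, z) : Fin d × Fin d)) (basisVec (y, z)) pq

noncomputable def onee : (Fin d × Fin d) × (Fin d × Fin d) → ℂ :=
  fun pq => ∑ r, outer (basisVec (r : Fin d × Fin d)) (basisVec r) pq

noncomputable def sig (v : Fin d × Fin d → ℂ) (x y : Fin d) : ℂ :=
  ∑ z, (starRingEnd ℂ) (v (x, z)) * v (y, z)

noncomputable def pur (v : Fin d × Fin d → ℂ) : ℝ :=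
  ∑ x, ∑ y, Complex.normSq (sig d v x y)

variable {d}

lemma ip_Pf_Pf (v w : Fin d × Fin d → ℂ) :
    ip (Pf d v) (Pf d w) = ip v w * (starRingEnd ℂ) (ip v w) :=
  ip_outer_outer v v w w

lemma ip_Pf_XF (v : Fin d × Fin d → ℂ) (x y : Fin d) :
    ip (Pf d v) (XF d x y) = sig d v x y := by
  rw [show XF d x y = fun pq => ∑ z, outer (basisVec ((x, z) : Fin d × Fin d)) (basisVec (y, z)) pq from rfl]
  rw [ip_sum_right' (fun z pq => outer (basisVec ((x,z) : Fin d × Fin d)) (basisVec (y,z)) pq)]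
  refine Finset.sum_congr rfl fun z _ => ?_
  rw [Pf, ip_outer_outer, ip_vec_basis, ip_vec_basis]
  simp [sig]

lemma ip_XF_XF (x y : Fin d) : ip (XF d x y) (XF d x y) = (d : ℂ) := by
  rw [show XF d x y = fun pq => ∑ z, outer (basisVec ((x, z) : Fin d × Fin d)) (basisVec (y, z)) pq from rfl]
  rw [ip_sum_left' (fun z pq => outer (basisVec ((x,z) : Fin d × Fin d)) (basisVec (y,z)) pq)]
  have : ∀ z : Fin d,
      ip (outer (basisVec ((x, z) : Fin d × Fin d)) (basisVec (y, z)))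
        (fun pq => ∑ z', outer (basisVec ((x, z') : Fin d × Fin d)) (basisVec (y, z')) pq)
      = 1 := by
    intro z
    rw [ip_sum_right' (fun z' pq => outer (basisVec ((x,z') : Fin d × Fin d)) (basisVec (y,z')) pq)]
    rw [Finset.sum_eq_single z]
    · rw [ip_outer_outer, ip_basis_basis, ip_basis_basis]; simp
    · intro b _ hb
      rw [ip_outer_outer, ip_basis_basis, ip_basis_basis]
      simp [Prod.ext_iff, (Ne.symm hb)]
    · simp
  rw [Finset.sum_congr rfl (fun z _ => this z)]
  simp

lemma ip_onee_XF (x y : Fin d) :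
    ip (onee d) (XF d x y) = if x = y then (d : ℂ) else 0 := by
  rw [show onee d = fun pq => ∑ r, outer (basisVec (r : Fin d × Fin d)) (basisVec r) pq from rfl]
  rw [ip_sum_left' (fun r pq => outer (basisVec (r : Fin d × Fin d)) (basisVec r) pq)]
  have : ∀ r : Fin d × Fin d,
      ip (outer (basisVec (r : Fin d × Fin d)) (basisVec r)) (XF d x y)
      = if x = y ∧ r.1 = x then 1 else 0 := by
    intro r
    rw [show XF d x y = fun pq => ∑ z, outer (basisVec ((x, z) : Fin d × Fin d)) (basisVec (y, z)) pq from rfl]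
    rw [ip_sum_right' (fun z pq => outer (basisVec ((x,z) : Fin d × Fin d)) (basisVec (y,z)) pq)]
    by_cases h : x = y ∧ r.1 = x
    · obtain ⟨h1, h2⟩ := h
      rw [Finset.sum_eq_single r.2]
      · rw [ip_outer_outer, ip_basis_basis, ip_basis_basis]
        simp [← h1, Prod.ext_iff, h2]
      · intro b _ hb
        rw [ip_outer_outer, ip_basis_basis, ip_basis_basis]
        have : r ≠ (x, b) := by
          intro hc; exact hb (by rw [hc])
        simp [this]
      · simp
    · rw [if_neg h]
      refine Finset.sum_eq_zero fun z _ => ?_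
      rw [ip_outer_outer, ip_basis_basis, ip_basis_basis]
      by_cases h1 : r = (x, z)
      · have h2 : r ≠ (y, z) := by
          intro hc
          rw [h1] at hc
          exact h ⟨(Prod.ext_iff.mp hc).1, by rw [h1]⟩
        simp [h2]
      · simp [h1]
  rw [Finset.sum_congr rfl (fun r _ => this r)]
  by_cases h : x = y
  · simp only [h, true_and, if_pos]
    rw [Fintype.sum_prod_type]
    have h2 : ∀ a : Fin d, (∑ _b : Fin d, if a = y then (1:ℂ) else 0) = if a = y then (d:ℂ) else 0 := by
      intro a; split <;> simp
    rw [Finset.sum_congr rfl fun a _ => h2 a]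
    simp [Finset.sum_ite_eq']
  · simp [h]

lemma ip_XF_onee (x y : Fin d) :
    ip (XF d x y) (onee d) = if x = y then (d : ℂ) else 0 := by
  rw [← ip_conj_symm, ip_onee_XF]
  split <;> simp

lemma ip_onee_onee : ip (onee d) (onee d) = ((d : ℂ))^2 := by
  rw [show onee d = fun pq => ∑ r, outer (basisVec (r : Fin d × Fin d)) (basisVec r) pq from rfl]
  rw [ip_sum_left' (fun r pq => outer (basisVec (r : Fin d × Fin d)) (basisVec r) pq)]
  have : ∀ r : Fin d × Fin d,
      ip (outer (basisVec (r : Fin d × Fin d)) (basisVec r))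
        (fun pq => ∑ s, outer (basisVec (s : Fin d × Fin d)) (basisVec s) pq) = 1 := by
    intro r
    rw [ip_sum_right' (fun s pq => outer (basisVec (s : Fin d × Fin d)) (basisVec s) pq)]
    rw [Finset.sum_eq_single r]
    · rw [ip_outer_outer, ip_basis_basis]; simp
    · intro b _ hb
      rw [ip_outer_outer, ip_basis_basis]
      simp [Ne.symm hb]
    · simp
  rw [Finset.sum_congr rfl (fun r _ => this r)]
  simp [Finset.card_univ]
  ring

lemma ip_Pf_onee (v : Fin d × Fin d → ℂ) (hv : ip v v = 1) :
    ip (Pf d v) (onee d) = 1 := by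
  rw [show onee d = fun pq => ∑ r, outer (basisVec (r : Fin d × Fin d)) (basisVec r) pq from rfl]
  rw [ip_sum_right' (fun r pq => outer (basisVec (r : Fin d × Fin d)) (basisVec r) pq)]
  have : ∀ r : Fin d × Fin d,
      ip (Pf d v) (outer (basisVec r) (basisVec r)) = (starRingEnd ℂ) (v r) * v r := by
    intro r
    rw [Pf, ip_outer_outer, ip_vec_basis]
    simp
  rw [Finset.sum_congr rfl (fun r _ => this r)]
  rw [← ip, hv]

end Dim

section MUB

variable {d : ℕ}

lemma onee_apply (pq : (Fin d × Fin d) × (Fin d × Fin d)) :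
    onee d pq = if pq.1 = pq.2 then 1 else 0 := by
  rw [show onee d pq = ∑ r, outer (basisVec (r : Fin d × Fin d)) (basisVec r) pq from rfl]
  by_cases h : pq.1 = pq.2
  · rw [if_pos h, Finset.sum_eq_single pq.1]
    · simp [outer, basisVec, h]
    · intro b _ hb
      simp [outer, basisVec, Ne.symm hb]
    · simp
  · rw [if_neg h]
    refine Finset.sum_eq_zero fun r _ => ?_
    by_cases h1 : pq.1 = r
    · have h2 : pq.2 ≠ r := fun hc => h (h1.trans hc.symm)
      simp [outer, basisVec, h2]
    · simp [outer, basisVec, h1]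

lemma col_orth (B : Fin (d ^ 2 + 1) → Fin (d ^ 2) → (Fin d × Fin d → ℂ))
    (horth : ∀ k i j, ip (B k i) (B k j) = if i = j then 1 else 0)
    (k : Fin (d ^ 2 + 1)) (p q : Fin d × Fin d) :
    (∑ i, B k i p * (starRingEnd ℂ) (B k i q)) = if p = q then 1 else 0 := by
  classical
  have e : Fin d × Fin d ≃ Fin (d ^ 2) := finProdFinEquiv.trans (finCongr (by ring))
  set M : Matrix (Fin (d ^ 2)) (Fin (d ^ 2)) ℂ :=
    Matrix.of (fun i j => (starRingEnd ℂ) (B k i (e.symm j))) with hM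
  have h1 : M * M.conjTranspose = 1 := by
    ext i j
    rw [Matrix.mul_apply, Matrix.one_apply]
    have hc : ∀ c, M i c * M.conjTranspose c j
        = (fun p => (starRingEnd ℂ) (B k i p) * B k j p) (e.symm c) := by
      intro c
      simp [hM, Matrix.conjTranspose_apply]
    rw [Finset.sum_congr rfl fun c _ => hc c,
      Equiv.sum_comp e.symm (fun p => (starRingEnd ℂ) (B k i p) * B k j p)]
    simpa [ip] using horth k i j
  have h2 : M.conjTranspose * M = 1 := mul_eq_one_comm.mp h1
  have h3 : (M.conjTranspose * M) (e p) (e q) = (1 : Matrix (Fin (d ^ 2)) (Fin (d ^ 2)) ℂ) (e p) (e q) := by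
    rw [h2]
  rw [Matrix.mul_apply, Matrix.one_apply] at h3
  have h4 : ∀ i, M.conjTranspose (e p) i * M i (e q) = B k i p * (starRingEnd ℂ) (B k i q) := by
    intro i
    simp [hM, Matrix.conjTranspose_apply]
  rw [Finset.sum_congr rfl fun i _ => h4 i] at h3
  rw [h3]
  simp [EmbeddingLike.apply_eq_iff_eq]

lemma resolution (B : Fin (d ^ 2 + 1) → Fin (d ^ 2) → (Fin d × Fin d → ℂ))
    (horth : ∀ k i j, ip (B k i) (B k j) = if i = j then 1 else 0)
    (k : Fin (d ^ 2 + 1)) :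
    (fun pq => ∑ i, Pf d (B k i) pq) = onee d := by
  funext pq
  rw [onee_apply]
  rw [show (∑ i, Pf d (B k i) pq) = ∑ i, B k i pq.1 * (starRingEnd ℂ) (B k i pq.2) from rfl]
  exact col_orth B horth k pq.1 pq.2

end MUB

section Gram

variable {d : ℕ}

lemma gram (hd : 0 < d) (B : Fin (d ^ 2 + 1) → Fin (d ^ 2) → (Fin d × Fin d → ℂ))
    (horth : ∀ k i j, ip (B k i) (B k j) = if i = j then 1 else 0)
    (hmub : ∀ k k', k ≠ k' → ∀ i j, ‖ip (B k i) (B k' j)‖ ^ 2 = 1 / (d : ℝ) ^ 2)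
    (v w : Fin (d ^ 2 + 1) × Fin (d ^ 2)) :
    ip (Pf d (B v.1 v.2)) (Pf d (B w.1 w.2))
      = (if v = w then 1 else 0)
        + ((d : ℂ) ^ 2)⁻¹ * (1 - if v.1 = w.1 then 1 else 0) := by
  rw [ip_Pf_Pf]
  by_cases h : v.1 = w.1
  · rw [h, horth w.1 v.2 w.2]
    by_cases h2 : v.2 = w.2
    · have hvw : v = w := Prod.ext h h2
      simp [hvw, h2]
    · have hvw : v ≠ w := fun hc => h2 (by rw [hc])
      simp [h2, hvw, h]
  · have hvw : v ≠ w := fun hc => h (by rw [hc])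
    have hm := hmub v.1 w.1 h v.2 w.2
    have hz : ip (B v.1 v.2) (B w.1 w.2) * (starRingEnd ℂ) (ip (B v.1 v.2) (B w.1 w.2))
        = ((‖ip (B v.1 v.2) (B w.1 w.2)‖ ^ 2 : ℝ) : ℂ) := by
      rw [Complex.mul_conj]
      norm_cast
      rw [Complex.normSq_eq_norm_sq]
    rw [hz, hm, if_neg hvw, if_neg h]
    have hdc : ((d : ℂ) ^ 2) ≠ 0 := by
      have : (d : ℂ) ≠ 0 := Nat.cast_ne_zero.mpr hd.ne'
      exact pow_ne_zero 2 this
    push_cast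
    field_simp
    ring

end Gram

section Bessel

variable {d : ℕ}

lemma bessel (hd : 0 < d) (B : Fin (d ^ 2 + 1) → Fin (d ^ 2) → (Fin d × Fin d → ℂ))
    (horth : ∀ k i j, ip (B k i) (B k j) = if i = j then 1 else 0)
    (hmub : ∀ k k', k ≠ k' → ∀ i j, ‖ip (B k i) (B k' j)‖ ^ 2 = 1 / (d : ℝ) ^ 2)
    (x y : Fin d) :
    ∑ v : Fin (d ^ 2 + 1) × Fin (d ^ 2), Complex.normSq (sig d (B v.1 v.2) x y)
      ≤ (d : ℝ) + (if x = y then (d : ℝ) ^ 2 else 0) := by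
  classical
  set t : Fin (d ^ 2 + 1) × Fin (d ^ 2) → ℂ :=
    fun v => ip (Pf d (B v.1 v.2)) (XF d x y) with ht_def
  set τ : ℂ := ip (onee d) (XF d x y) with hτ_def
  have hτ : τ = if x = y then (d : ℂ) else 0 := ip_onee_XF x y
  have hτc : (starRingEnd ℂ) τ = τ := by rw [hτ]; split <;> simp
  have hnτ : (Complex.normSq τ : ℝ) = if x = y then (d : ℝ) ^ 2 else 0 := by
    rw [hτ]; split
    · rw [show ((d : ℕ) : ℂ) = (((d : ℕ) : ℝ) : ℂ) by push_cast; ring, Complex.normSq_ofReal]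
      ring
    · simp
  have hτmul : τ * τ = (Complex.normSq τ : ℂ) := by
    nth_rewrite 2 [← hτc]
    exact Complex.mul_conj τ
  -- row sums
  have hs : ∀ k, (∑ i, t (k, i)) = τ := by
    intro k
    have h1 := ip_sum_left' (fun i pq => Pf d (B k i) pq) (XF d x y)
    rw [show (fun pq => ∑ i, Pf d (B k i) pq) = onee d from resolution B horth k] at h1
    exact h1.symm
  have hT : (∑ v : Fin (d ^ 2 + 1) × Fin (d ^ 2), t v) = ((d ^ 2 + 1 : ℕ) : ℂ) * τ := by
    rw [Fintype.sum_prod_type, Finset.sum_congr rfl fun k _ => hs k]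
    simp [Finset.card_univ, mul_comm]
  set A : (Fin d × Fin d) × (Fin d × Fin d) → ℂ :=
    fun pq => ∑ v : Fin (d ^ 2 + 1) × Fin (d ^ 2), t v * Pf d (B v.1 v.2) pq with hA_def
  set Bf : (Fin d × Fin d) × (Fin d × Fin d) → ℂ :=
    fun pq => XF d x y pq + τ * onee d pq with hBf_def
  have hdc : ((d : ℂ) ^ 2) ≠ 0 := pow_ne_zero 2 (Nat.cast_ne_zero.mpr hd.ne')
  -- inner products of the projectors with A
  have hinner : ∀ v : Fin (d ^ 2 + 1) × Fin (d ^ 2),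
      ip (Pf d (B v.1 v.2)) A = t v + τ := by
    intro v
    rw [hA_def, ip_sum_right t (fun w pq => Pf d (B w.1 w.2) pq)]
    have hsplit : ∀ w : Fin (d ^ 2 + 1) × Fin (d ^ 2),
        t w * ip (Pf d (B v.1 v.2)) (Pf d (B w.1 w.2))
        = (if v = w then t w else 0) + ((d : ℂ) ^ 2)⁻¹ * t w
          - ((d : ℂ) ^ 2)⁻¹ * (if v.1 = w.1 then t w else 0) := by
      intro w
      rw [gram hd B horth hmub v w]
      by_cases h1 : v = w
      · have h2 : v.1 = w.1 := by rw [h1]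
        simp only [if_pos h1, if_pos h2]
        ring
      · by_cases h2 : v.1 = w.1
        · simp only [if_neg h1, if_pos h2]; ring
        · simp only [if_neg h1, if_neg h2]; ring
    rw [Finset.sum_congr rfl fun w _ => hsplit w]
    rw [Finset.sum_sub_distrib, Finset.sum_add_distrib]
    have p1 : (∑ w : Fin (d ^ 2 + 1) × Fin (d ^ 2), if v = w then t w else 0) = t v := by
      rw [Finset.sum_ite_eq]; simp
    have p2 : (∑ w : Fin (d ^ 2 + 1) × Fin (d ^ 2), ((d : ℂ) ^ 2)⁻¹ * t w)
        = ((d : ℂ) ^ 2)⁻¹ * (((d ^ 2 + 1 : ℕ) : ℂ) * τ) := by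
      rw [← Finset.mul_sum, hT]
    have p3 : (∑ w : Fin (d ^ 2 + 1) × Fin (d ^ 2),
        ((d : ℂ) ^ 2)⁻¹ * (if v.1 = w.1 then t w else 0)) = ((d : ℂ) ^ 2)⁻¹ * τ := by
      rw [← Finset.mul_sum]
      congr 1
      rw [Fintype.sum_prod_type]
      have hin : ∀ k, (∑ i, if v.1 = k then t (k, i) else 0) = if v.1 = k then τ else 0 := by
        intro k
        by_cases hk : v.1 = k
        · simp only [if_pos hk]; exact hs k
        · simp [hk]
      rw [Finset.sum_congr rfl fun k _ => hin k, Finset.sum_ite_eq]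
      simp
    rw [p1, p2, p3]
    have harith : ((d : ℂ) ^ 2)⁻¹ * (((d ^ 2 + 1 : ℕ) : ℂ) * τ) - ((d : ℂ) ^ 2)⁻¹ * τ = τ := by
      rw [← mul_sub, Nat.cast_add, Nat.cast_pow, Nat.cast_one, add_mul, one_mul,
        add_sub_cancel_right, ← mul_assoc, inv_mul_cancel₀ hdc, one_mul]
    rw [add_sub_assoc, harith]
  -- inner products of the projectors with Bf
  have hPfBf : ∀ v : Fin (d ^ 2 + 1) × Fin (d ^ 2),
      ip (Pf d (B v.1 v.2)) Bf = t v + τ := by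
    intro v
    rw [hBf_def, ip_add_right _ (XF d x y) (fun pq => τ * onee d pq), ip_smul_right]
    rw [ip_Pf_onee (B v.1 v.2) (by simpa using horth v.1 v.2 v.2)]
    have : ip (Pf d (B v.1 v.2)) (XF d x y) = t v := rfl
    rw [this]; ring
  -- value of the three inner products
  set S0 : ℂ := ((∑ v : Fin (d ^ 2 + 1) × Fin (d ^ 2), Complex.normSq (t v) : ℝ) : ℂ)
      + ((d ^ 2 + 1 : ℕ) : ℂ) * (Complex.normSq τ : ℂ) with hS0_def
  have hsum_eq : (∑ v : Fin (d ^ 2 + 1) × Fin (d ^ 2), (starRingEnd ℂ) (t v) * (t v + τ))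
      = S0 := by
    have h1 : ∀ v : Fin (d ^ 2 + 1) × Fin (d ^ 2), (starRingEnd ℂ) (t v) * (t v + τ)
        = (Complex.normSq (t v) : ℂ) + (starRingEnd ℂ) (t v) * τ := by
      intro v
      rw [mul_add]
      congr 1
      rw [mul_comm, Complex.mul_conj]
    rw [Finset.sum_congr rfl fun v _ => h1 v, Finset.sum_add_distrib, hS0_def]
    congr 1
    · push_cast
      rfl
    · rw [← Finset.sum_mul, ← map_sum, hT, _root_.map_mul, map_natCast, hτc, mul_assoc, hτmul]
  have hAA : ip A A = S0 := by
    rw [hA_def, ip_sum_left t (fun w pq => Pf d (B w.1 w.2) pq), ← hsum_eq]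
    exact Finset.sum_congr rfl fun v _ => by rw [hinner v]
  have hABf : ip A Bf = S0 := by
    rw [hA_def, ip_sum_left t (fun w pq => Pf d (B w.1 w.2) pq), ← hsum_eq]
    exact Finset.sum_congr rfl fun v _ => by rw [hPfBf v]
  have hS0c : (starRingEnd ℂ) S0 = S0 := by
    rw [hS0_def]
    simp [map_add, _root_.map_mul, Complex.conj_ofReal, map_natCast]
  have hBfA : ip Bf A = S0 := by
    rw [← ip_conj_symm A Bf, hABf, hS0c]
  have hBfBf : ip Bf Bf = (d : ℂ) + ((d : ℂ) ^ 2 + 2) * (Complex.normSq τ : ℂ) := by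
    rw [hBf_def]
    rw [ip_add_left (XF d x y) (fun pq => τ * onee d pq) _]
    rw [ip_add_right _ (XF d x y) (fun pq => τ * onee d pq)]
    rw [ip_add_right _ (XF d x y) (fun pq => τ * onee d pq)]
    rw [ip_smul_left, ip_smul_right, ip_smul_right, ip_smul_left]
    rw [ip_XF_XF, ip_XF_onee, ip_onee_onee, hτc, ← hτ_def, ← hτ]
    rw [← hτmul]
    ring
  -- positivity
  have hpos := ip_re_nonneg (fun pq => A pq - Bf pq)
  have hexp : ip (fun pq => A pq - Bf pq) (fun pq => A pq - Bf pq)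
      = ip A A - ip A Bf - (ip Bf A - ip Bf Bf) := by
    rw [ip_sub_left A Bf (fun pq => A pq - Bf pq), ip_sub_right A A Bf, ip_sub_right Bf A Bf]
  rw [hexp, hAA, hABf, hBfA, hBfBf] at hpos
  have hval : S0 - S0 - (S0 - ((d : ℂ) + ((d : ℂ) ^ 2 + 2) * (Complex.normSq τ : ℂ)))
      = ((((d : ℝ) + Complex.normSq τ
          - ∑ v : Fin (d ^ 2 + 1) × Fin (d ^ 2), Complex.normSq (t v)) : ℝ) : ℂ) := by
    rw [hS0_def]
    push_cast
    ring
  rw [hval, Complex.ofReal_re] at hpos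
  have hgoal : (∑ v : Fin (d ^ 2 + 1) × Fin (d ^ 2), Complex.normSq (sig d (B v.1 v.2) x y))
      = ∑ v : Fin (d ^ 2 + 1) × Fin (d ^ 2), Complex.normSq (t v) := by
    refine Finset.sum_congr rfl fun v _ => ?_
    rw [show t v = ip (Pf d (B v.1 v.2)) (XF d x y) from rfl, ip_Pf_XF]
  rw [hgoal, ← hnτ]
  linarith

end Bessel

section Purity

variable {d : ℕ}

lemma total_pur (hd : 0 < d) (B : Fin (d ^ 2 + 1) → Fin (d ^ 2) → (Fin d × Fin d → ℂ))
    (horth : ∀ k i j, ip (B k i) (B k j) = if i = j then 1 else 0)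
    (hmub : ∀ k k', k ≠ k' → ∀ i j, ‖ip (B k i) (B k' j)‖ ^ 2 = 1 / (d : ℝ) ^ 2) :
    ∑ v : Fin (d ^ 2 + 1) × Fin (d ^ 2), pur d (B v.1 v.2) ≤ 2 * (d : ℝ) ^ 3 := by
  have h1 : ∑ v : Fin (d ^ 2 + 1) × Fin (d ^ 2), pur d (B v.1 v.2)
      = ∑ x : Fin d, ∑ y : Fin d,
          ∑ v : Fin (d ^ 2 + 1) × Fin (d ^ 2), Complex.normSq (sig d (B v.1 v.2) x y) := by
    simp only [pur]
    rw [Finset.sum_comm]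
    exact Finset.sum_congr rfl fun x _ => Finset.sum_comm
  rw [h1]
  have h2 : ∑ x : Fin d, ∑ y : Fin d,
      ∑ v : Fin (d ^ 2 + 1) × Fin (d ^ 2), Complex.normSq (sig d (B v.1 v.2) x y)
      ≤ ∑ x : Fin d, ∑ y : Fin d, ((d : ℝ) + (if x = y then (d : ℝ) ^ 2 else 0)) := by
    refine Finset.sum_le_sum fun x _ => Finset.sum_le_sum fun y _ => ?_
    exact bessel hd B horth hmub x y
  refine h2.trans ?_
  have h3 : ∀ x : Fin d, ∑ y : Fin d, ((d : ℝ) + (if x = y then (d : ℝ) ^ 2 else 0))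
      = (d : ℝ) * d + (d : ℝ) ^ 2 := by
    intro x
    rw [Finset.sum_add_distrib, Finset.sum_ite_eq]
    simp [Finset.card_univ, mul_comm]
  rw [Finset.sum_congr rfl fun x _ => h3 x]
  rw [Finset.sum_const, Finset.card_univ]
  simp only [Fintype.card_fin, nsmul_eq_mul]
  ring_nf
  nlinarith [sq_nonneg (d:ℝ)]

lemma pur_ge (hd : 0 < d) (v : Fin d × Fin d → ℂ) (hn : ip v v = 1) :
    1 / (d : ℝ) ≤ pur d v := by
  set R : Fin d → ℝ := fun x => ∑ z, Complex.normSq (v (x, z)) with hR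
  have hsig : ∀ x, sig d v x x = ((R x : ℝ) : ℂ) := by
    intro x
    rw [sig, hR]
    push_cast
    refine Finset.sum_congr rfl fun z _ => ?_
    rw [mul_comm, Complex.mul_conj]
  have hR1 : ∑ x, R x = 1 := by
    have := hn
    rw [ip_re_eq] at this
    have h2 : (∑ p : Fin d × Fin d, Complex.normSq (v p)) = 1 := by
      exact_mod_cast this
    rw [← h2, Fintype.sum_prod_type]
  have hRnn : ∀ x, 0 ≤ R x := fun x => Finset.sum_nonneg fun z _ => Complex.normSq_nonneg _
  have hdiag : ∑ x, (R x) ^ 2 ≤ pur d v := by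
    rw [pur]
    refine Finset.sum_le_sum fun x _ => ?_
    have h4 : Complex.normSq (sig d v x x) = (R x) ^ 2 := by
      rw [hsig, Complex.normSq_ofReal]; ring
    rw [← h4]
    exact Finset.single_le_sum (fun y _ => Complex.normSq_nonneg _) (Finset.mem_univ x)
  have hcs : (∑ x, R x) ^ 2 ≤ (Finset.univ.card : ℝ) * ∑ x, (R x) ^ 2 :=
    sq_sum_le_card_mul_sum_sq
  rw [hR1, Finset.card_univ, Fintype.card_fin] at hcs
  have hdpos : (0 : ℝ) < d := by exact_mod_cast hd
  have : 1 / (d : ℝ) ≤ ∑ x, (R x) ^ 2 := by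
    rw [div_le_iff₀ hdpos]
    nlinarith
  linarith

lemma pur_prod (v : Fin d × Fin d → ℂ) (hn : ip v v = 1) (hp : IsProductState d v) :
    pur d v = 1 := by
  obtain ⟨a, b, hab⟩ := hp
  set α : ℝ := ∑ x, Complex.normSq (a x) with hα
  set β : ℝ := ∑ z, Complex.normSq (b z) with hβ
  have hsig : ∀ x y, sig d v x y = (starRingEnd ℂ) (a x) * a y * ((β : ℝ) : ℂ) := by
    intro x y
    rw [sig]
    have h1 : ∀ z : Fin d, (starRingEnd ℂ) (v (x, z)) * v (y, z)
        = (starRingEnd ℂ) (a x) * a y * ((starRingEnd ℂ) (b z) * b z) := by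
      intro z
      rw [hab (x, z), hab (y, z)]
      simp only [_root_.map_mul]
      ring
    rw [Finset.sum_congr rfl fun z _ => h1 z, ← Finset.mul_sum]
    congr 1
    rw [hβ]
    push_cast
    refine Finset.sum_congr rfl fun z _ => ?_
    rw [mul_comm, Complex.mul_conj]
  have hpur : pur d v = α ^ 2 * β ^ 2 := by
    rw [pur]
    have h2 : ∀ x y : Fin d, Complex.normSq (sig d v x y)
        = Complex.normSq (a x) * Complex.normSq (a y) * β ^ 2 := by
      intro x y
      rw [hsig x y, Complex.normSq_mul, Complex.normSq_mul, Complex.normSq_conj,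
        Complex.normSq_ofReal]
      ring
    rw [Finset.sum_congr rfl fun x _ => Finset.sum_congr rfl fun y _ => h2 x y]
    have h3 : ∀ x : Fin d, ∑ y, Complex.normSq (a x) * Complex.normSq (a y) * β ^ 2
        = Complex.normSq (a x) * α * β ^ 2 := by
      intro x
      rw [← Finset.sum_mul, ← Finset.mul_sum, ← hα]
    rw [Finset.sum_congr rfl fun x _ => h3 x, ← Finset.sum_mul, ← Finset.sum_mul, ← hα]
    ring
  have hαβ : α * β = 1 := by
    have := hn
    rw [ip_re_eq] at this
    have h2 : (∑ p : Fin d × Fin d, Complex.normSq (v p)) = 1 := by exact_mod_cast this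
    rw [Fintype.sum_prod_type] at h2
    have h3 : ∀ x : Fin d, ∑ z, Complex.normSq (v (x, z)) = Complex.normSq (a x) * β := by
      intro x
      rw [hβ, Finset.mul_sum]
      refine Finset.sum_congr rfl fun z _ => ?_
      rw [hab (x, z), Complex.normSq_mul]
    rw [Finset.sum_congr rfl fun x _ => h3 x, ← Finset.sum_mul, ← hα] at h2
    exact h2
  rw [hpur]
  nlinarith

end Purity

end MUBProof


open MUBProof in
/-- For prime `d`, if a complete set of `d²+1` mutually unbiased bases of
`ℂ^d ⊗ ℂ^d` contains `d+1` bases consisting entirely of product states, then it contains at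
least `d(d−1)` bases that do not consist entirely of product states. -/
theorem product_mubs_force_entangled (d : ℕ) (hd : d.Prime)
    (B : Fin (d ^ 2 + 1) → Fin (d ^ 2) → (Fin d × Fin d → ℂ))
    (horth : ∀ k, ∀ i j, (∑ p : Fin d × Fin d, starRingEnd ℂ (B k i p) * B k j p)
      = if i = j then 1 else 0)
    (hmub : ∀ k k', k ≠ k' → ∀ i j,
      ‖∑ p : Fin d × Fin d, starRingEnd ℂ (B k i p) * B k' j p‖ ^ 2 = 1 / (d : ℝ) ^ 2)
    (hprod : ∃ S : Finset (Fin (d ^ 2 + 1)), S.card = d + 1 ∧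
      ∀ k ∈ S, ∀ i, IsProductState d (B k i)) :
    ∃ T : Finset (Fin (d ^ 2 + 1)), d * (d - 1) ≤ T.card ∧
      ∀ k ∈ T, ∃ i, ¬ IsProductState d (B k i) := by
  classical
  have hd2 : 2 ≤ d := hd.two_le
  have hd0 : 0 < d := by omega
  have horth' : ∀ k i j, ip (B k i) (B k j) = if i = j then 1 else 0 := horth
  have hmub' : ∀ k k', k ≠ k' → ∀ i j, ‖ip (B k i) (B k' j)‖ ^ 2 = 1 / (d : ℝ) ^ 2 := hmub
  have hnorm : ∀ k i, ip (B k i) (B k i) = 1 := by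
    intro k i
    simpa using horth' k i i
  set P : Fin (d ^ 2 + 1) → Prop := fun k => ∀ i, IsProductState d (B k i) with hP
  set U : Finset (Fin (d ^ 2 + 1)) := Finset.univ.filter P with hU
  set T : Finset (Fin (d ^ 2 + 1)) := Finset.univ.filter (fun k => ¬ P k) with hT
  -- total purity bound
  have htot : ∑ k, ∑ i, pur d (B k i) ≤ 2 * (d : ℝ) ^ 3 := by
    have := total_pur hd0 B horth' hmub'
    rwa [Fintype.sum_prod_type] at this
  have hsplit : (∑ k ∈ U, ∑ i, pur d (B k i)) + (∑ k ∈ T, ∑ i, pur d (B k i))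
      = ∑ k, ∑ i, pur d (B k i) :=
    Finset.sum_filter_add_sum_filter_not _ _ _
  have hUsum : ∑ k ∈ U, ∑ i, pur d (B k i) = (U.card : ℝ) * (d : ℝ) ^ 2 := by
    have h1 : ∀ k ∈ U, (∑ i, pur d (B k i)) = (d : ℝ) ^ 2 := by
      intro k hk
      have hkP : P k := (Finset.mem_filter.mp hk).2
      have h2 : ∀ i : Fin (d ^ 2), pur d (B k i) = 1 :=
        fun i => pur_prod (B k i) (hnorm k i) (hkP i)
      rw [Finset.sum_congr rfl fun i _ => h2 i, Finset.sum_const, Finset.card_univ]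
      simp
    rw [Finset.sum_congr rfl h1, Finset.sum_const, nsmul_eq_mul]
  have hTsum : (T.card : ℝ) * (d : ℝ) ≤ ∑ k ∈ T, ∑ i, pur d (B k i) := by
    have h1 : ∀ k ∈ T, (d : ℝ) ≤ ∑ i, pur d (B k i) := by
      intro k _
      have h2 : ∀ i : Fin (d ^ 2), 1 / (d : ℝ) ≤ pur d (B k i) :=
        fun i => pur_ge hd0 (B k i) (hnorm k i)
      have h0 : ((d^2 : ℕ) : ℝ) * (1 / (d : ℝ)) = (d : ℝ) := by
        push_cast
        field_simp
      calc (d : ℝ) = ((d^2 : ℕ) : ℝ) * (1 / (d : ℝ)) := h0.symm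
        _ = ∑ _i : Fin (d ^ 2), (1 / (d : ℝ)) := by
            rw [Finset.sum_const, Finset.card_univ, Fintype.card_fin, nsmul_eq_mul]
        _ ≤ ∑ i, pur d (B k i) := Finset.sum_le_sum fun i _ => h2 i
    calc (T.card : ℝ) * (d : ℝ) = ∑ _k ∈ T, (d : ℝ) := by
          rw [Finset.sum_const, nsmul_eq_mul]
      _ ≤ _ := Finset.sum_le_sum h1
  -- counting
  have hcard : U.card + T.card = d ^ 2 + 1 := by
    have := Finset.card_filter_add_card_filter_not (p := P) (s := Finset.univ)
    simpa using this
  have hdR : (2 : ℝ) ≤ (d : ℝ) := by exact_mod_cast hd2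
  have hUle : U.card ≤ d + 1 := by
    by_contra hc
    push_neg at hc
    have hc' : ((d + 2 : ℕ) : ℝ) ≤ (U.card : ℝ) := by exact_mod_cast hc
    push_cast at hc'
    have hTcard : (T.card : ℝ) = ((d:ℝ)^2 + 1) - U.card := by
      have : (U.card : ℝ) + T.card = (d:ℝ)^2 + 1 := by exact_mod_cast hcard
      linarith
    nlinarith [hUsum, hTsum, htot, hsplit]
  refine ⟨T, ?_, ?_⟩
  · have h6 : d * (d - 1) + d = d * d := by
      have h7 : (d - 1) + 1 = d := Nat.succ_pred_eq_of_pos hd0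
      calc d * (d - 1) + d = d * ((d - 1) + 1) := by ring
        _ = d * d := by rw [h7]
    have h8 : d ^ 2 = d * d := sq d
    omega
  · intro k hk
    have := (Finset.mem_filter.mp hk).2
    rw [hP] at this
    exact not_forall.mp this
end

section
/- Let d be an odd prime, γ = exp(2πi/d), and for k ∈ {1,…,d−1}, t ∈ {0,…,d−1} define |γ_t^{(k)}⟩ = (1/√d) Σ_{h=0}^{d−1} γ^{t(d−h)} γ^{−k α_h} |h⟩ with α_h = h + … + (d−1). Then |γ_t^{(k)}⟩ ∙ (|γ_t^{(k)}⟩)† = |0⟩, i.e. the corresponding operator Z_t^{(k)} = (1/√d) Σ_h γ^{t(d−h)} γ^{−k α_h} Z^h is unitary. -/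
open Matrix Complex

noncomputable def omega (d : ℕ) : ℂ := Complex.exp (2 * Real.pi * Complex.I / d)

noncomputable def Zmat (d : ℕ) : Matrix (Fin d) (Fin d) ℂ :=
  Matrix.diagonal (fun j : Fin d => omega d ^ (j : ℕ))

noncomputable def Gmap (d : ℕ) (φ : Fin d → ℂ) : Matrix (Fin d) (Fin d) ℂ :=
  ∑ i : Fin d, φ i • Zmat d ^ (i : ℕ)

noncomputable def conv (d : ℕ) [NeZero d] (φ ψ : Fin d → ℂ) : Fin d → ℂ :=
  fun q => ∑ i : Fin d, φ i * ψ (q - i)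

noncomputable def evec (d : ℕ) [NeZero d] : Fin d → ℂ :=
  fun q => if q = 0 then 1 else 0

noncomputable def dagVec (d : ℕ) [NeZero d] (φ : Fin d → ℂ) : Fin d → ℂ :=
  fun j => starRingEnd ℂ (φ (-j))

/-- `α_h = h + (h+1) + … + (d−1)`. -/
def alphaSum (d h : ℕ) : ℕ := ∑ j ∈ Finset.Ico h d, j

/-- `|γ_t^{(k)}⟩ = (1/√d) Σ_{h=0}^{d−1} γ^{t(d−h)} γ^{−k α_h} |h⟩`. -/
noncomputable def gvec (d k t : ℕ) : Fin d → ℂ := fun h =>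
  (1 / (Real.sqrt d : ℂ)) * omega d ^ (t * (d - (h : ℕ))) *
    (omega d ^ (k * alphaSum d (h : ℕ)))⁻¹

set_option linter.unusedSectionVars false
set_option linter.unusedVariables false

section
variable (d : ℕ) [NeZero d]

lemma omega_prim : IsPrimitiveRoot (omega d) d := Complex.isPrimitiveRoot_exp d (NeZero.ne d)

lemma omega_ne_zero : omega d ≠ 0 := Complex.exp_ne_zero _

lemma omega_pow_d : omega d ^ d = 1 := (omega_prim d).pow_eq_one

lemma omega_pow_mod (n : ℕ) : omega d ^ n = omega d ^ (n % d) := by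
  conv_lhs => rw [← Nat.mod_add_div n d, pow_add, pow_mul, omega_pow_d, one_pow, mul_one]

lemma omega_pow_congr {m n : ℕ} (h : m % d = n % d) : omega d ^ m = omega d ^ n := by
  rw [omega_pow_mod d m, omega_pow_mod d n, h]

lemma omega_conj : starRingEnd ℂ (omega d) = (omega d)⁻¹ := by
  unfold omega
  rw [← Complex.exp_conj, ← Complex.exp_neg]
  congr 1
  simp [map_div₀, map_ofNat]
  ring

lemma omega_conj_pow (n : ℕ) : starRingEnd ℂ (omega d ^ n) = (omega d ^ n)⁻¹ := by
  rw [map_pow, omega_conj, inv_pow]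

lemma omega_zpow_congr {a b : ℤ} (h : (a : ZMod d) = b) : omega d ^ a = omega d ^ b := by
  have hdvd : (d : ℤ) ∣ b - a := by
    have := (ZMod.intCast_eq_intCast_iff a b d).mp h
    exact Int.ModEq.dvd this
  have h1 : omega d ^ (b - a) = 1 := ((omega_prim d).zpow_eq_one_iff_dvd _).mpr hdvd
  have := omega_ne_zero d
  calc omega d ^ a = omega d ^ a * omega d ^ (b - a) := by rw [h1, mul_one]
    _ = omega d ^ b := by rw [← zpow_add₀ this]; ring_nf

lemma fin_neg_cast (x : Fin d) : (((-x : Fin d) : ℕ) : ZMod d) = -((x : ℕ) : ZMod d) := by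
  rw [Fin.neg_def]
  have hx : (x : ℕ) ≤ d := le_of_lt x.isLt
  push_cast [ZMod.natCast_mod, Nat.cast_sub hx]
  simp

lemma fin_sub_cast (x y : Fin d) : (((x - y : Fin d) : ℕ) : ZMod d) = ((x:ℕ) : ZMod d) - ((y:ℕ) : ZMod d) := by
  rw [Fin.sub_def]
  have hy : (y : ℕ) ≤ d := le_of_lt y.isLt
  push_cast [ZMod.natCast_mod, Nat.cast_sub hy]
  simp
  ring

end


lemma alphaSum_identity (d h : ℕ) (hh : h ≤ d) :
    2 * alphaSum d h + h * h + d = d * d + h := by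
  have h1 : ∑ j ∈ Finset.range h, j + alphaSum d h = ∑ j ∈ Finset.range d, j := by
    rw [alphaSum, ← Finset.sum_range_add_sum_Ico _ hh]
  have h2 := Finset.sum_range_id_mul_two h
  have h3 := Finset.sum_range_id_mul_two d
  have h4 : h * (h - 1) + h = h * h := by
    cases h with
    | zero => simp
    | succ n => simp [Nat.succ_sub_one]; ring
  have h5 : d * (d - 1) + d = d * d := by
    cases d with
    | zero => simp
    | succ n => simp [Nat.succ_sub_one]; ring
  omega

lemma alphaSum_zmod (d h : ℕ) (hh : h ≤ d) :
    (2 : ZMod d) * (alphaSum d h : ZMod d) = (h : ZMod d) - (h : ZMod d)^2 := by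
  have h0 := alphaSum_identity d h hh
  have h1 : ((2 * alphaSum d h + h * h + d : ℕ) : ZMod d) = ((d * d + h : ℕ) : ZMod d) := by
    rw [h0]
  push_cast at h1
  simp [ZMod.natCast_self] at h1
  linear_combination h1






noncomputable def Fdft (d : ℕ) (φ : Fin d → ℂ) (j : Fin d) : ℂ :=
  ∑ i : Fin d, φ i * omega d ^ ((j : ℕ) * (i : ℕ))

lemma Gmap_eq_diagonal (d : ℕ) (φ : Fin d → ℂ) :
    Gmap d φ = Matrix.diagonal (Fdft d φ) := by
  ext a b
  simp only [Gmap, Zmat, Matrix.diagonal_pow, Matrix.sum_apply, Matrix.smul_apply,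
    Matrix.diagonal_apply, Pi.pow_apply, smul_eq_mul]
  by_cases h : a = b
  · subst h
    simp [Fdft, ← pow_mul]
  · simp [h]

lemma Gmap_evec (d : ℕ) [NeZero d] : Gmap d (evec d) = 1 := by
  rw [Gmap_eq_diagonal]
  have : Fdft d (evec d) = fun _ => 1 := by
    funext j
    simp [Fdft, evec]
  rw [this]
  simp [Matrix.diagonal_one]

lemma Fdft_conv (d : ℕ) [NeZero d] (φ ψ : Fin d → ℂ) (j : Fin d) :
    Fdft d (conv d φ ψ) j = Fdft d φ j * Fdft d ψ j := by
  unfold Fdft conv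
  rw [Finset.sum_mul_sum]
  simp only [Finset.sum_mul]
  rw [Finset.sum_comm]
  refine Finset.sum_congr rfl (fun i _ => ?_)
  rw [← Equiv.sum_comp (Equiv.addLeft i) (fun q => φ i * ψ (q - i) * omega d ^ ((j:ℕ)*(q:ℕ)))]
  refine Finset.sum_congr rfl (fun r _ => ?_)
  simp only [Equiv.coe_addLeft, add_sub_cancel_left]
  have : omega d ^ ((j:ℕ) * ((i + r : Fin d) : ℕ)) =
      omega d ^ ((j:ℕ) * (i:ℕ)) * omega d ^ ((j:ℕ) * (r:ℕ)) := by
    rw [← pow_add]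
    apply omega_pow_congr
    have : ((i + r : Fin d) : ℕ) = ((i:ℕ) + (r:ℕ)) % d := by rw [Fin.add_def]
    rw [this]
    have h2 : ((j:ℕ) * (((i:ℕ)+(r:ℕ)) % d)) % d = ((j:ℕ) * ((i:ℕ)+(r:ℕ))) % d :=
      Nat.ModEq.mul_left _ (Nat.mod_modEq _ d)
    rw [h2, Nat.mul_add]
  rw [this]; ring

lemma Fdft_dagVec (d : ℕ) [NeZero d] (φ : Fin d → ℂ) (j : Fin d) :
    Fdft d (dagVec d φ) j = starRingEnd ℂ (Fdft d φ j) := by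
  unfold Fdft dagVec
  rw [map_sum]
  rw [← Equiv.sum_comp (Equiv.neg (Fin d)) (fun q => starRingEnd ℂ (φ (-q)) * omega d ^ ((j:ℕ)*(q:ℕ)))]
  refine Finset.sum_congr rfl (fun r _ => ?_)
  simp only [Equiv.neg_apply, neg_neg, _root_.map_mul, omega_conj_pow]
  congr 1
  rw [← zpow_natCast (omega d), ← zpow_natCast (omega d) ((j:ℕ)*(r:ℕ)), ← _root_.zpow_neg]
  apply omega_zpow_congr
  push_cast
  rw [fin_neg_cast]
  ring

lemma zpow_combine (ζ : ℂ) (hζ : ζ ≠ 0) (A B C D : ℕ) :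
    ζ^A * (ζ^B)⁻¹ * ((ζ^C)⁻¹ * ζ^D) = ζ^((A:ℤ) + D - C - B) := by
  rw [zpow_sub₀ hζ, zpow_sub₀ hζ, zpow_add₀ hζ, zpow_natCast, zpow_natCast, zpow_natCast,
    zpow_natCast]
  field_simp


theorem conv_gvec (d : ℕ) [NeZero d] (hd : d.Prime) (hodd : Odd d)
    (k t : ℕ) (hk1 : 1 ≤ k) (hk2 : k ≤ d - 1) :
    conv d (gvec d k t) (dagVec d (gvec d k t)) = evec d := by
  have hζ0 : omega d ≠ 0 := omega_ne_zero d
  have hdpos : 0 < d := Nat.pos_of_ne_zero (NeZero.ne d)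
  have hsqrt : ((Real.sqrt d : ℝ) : ℂ) * ((Real.sqrt d : ℝ) : ℂ) = (d : ℂ) := by
    norm_cast
    exact Real.mul_self_sqrt (Nat.cast_nonneg d)
  funext q
  -- term formula
  have hterm : ∀ i : Fin d,
      gvec d k t i * dagVec d (gvec d k t) (q - i)
        = (1/(d:ℂ)) * omega d ^ (((t*(d - (i:ℕ)) : ℕ) : ℤ)
            + ((k * alphaSum d (((i - q : Fin d)):ℕ) : ℕ) : ℤ)
            - ((t*(d - (((i - q : Fin d)):ℕ)) : ℕ) : ℤ)
            - ((k * alphaSum d (i:ℕ) : ℕ) : ℤ)) := by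
    intro i
    have hneg : -(q - i) = i - q := neg_sub q i
    simp only [gvec, dagVec, hneg, _root_.map_mul, map_inv₀, map_div₀, _root_.map_one,
      Complex.conj_ofReal, omega_conj_pow, inv_inv]
    rw [← zpow_combine (omega d) hζ0]
    have h2 : (1 / ((Real.sqrt d : ℝ) : ℂ)) * (1 / ((Real.sqrt d : ℝ) : ℂ)) = 1 / (d:ℂ) := by
      rw [div_mul_div_comm, one_mul, hsqrt]
    calc (1 / ((Real.sqrt d : ℝ) : ℂ) * omega d ^ (t * (d - (i:ℕ))) *
            (omega d ^ (k * alphaSum d (i:ℕ)))⁻¹) *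
          (1 / ((Real.sqrt d : ℝ) : ℂ) * (omega d ^ (t * (d - (((i - q : Fin d)):ℕ))))⁻¹ *
            omega d ^ (k * alphaSum d (((i - q : Fin d)):ℕ)))
        = ((1 / ((Real.sqrt d : ℝ) : ℂ)) * (1 / ((Real.sqrt d : ℝ) : ℂ))) *
          (omega d ^ (t * (d - (i:ℕ))) * (omega d ^ (k * alphaSum d (i:ℕ)))⁻¹ *
           ((omega d ^ (t * (d - (((i - q : Fin d)):ℕ))))⁻¹ *
             omega d ^ (k * alphaSum d (((i - q : Fin d)):ℕ)))) := by ring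
      _ = _ := by rw [h2]
  by_cases hq : q = 0
  · subst hq
    have : ∀ i : Fin d, gvec d k t i * dagVec d (gvec d k t) (0 - i) = 1/(d:ℂ) := by
      intro i
      rw [hterm i]
      have : i - 0 = i := sub_zero i
      rw [this]
      have hz : (((t*(d - (i:ℕ)) : ℕ) : ℤ) + ((k * alphaSum d (i:ℕ) : ℕ) : ℤ)
          - ((t*(d - ((i:ℕ))) : ℕ) : ℤ) - ((k * alphaSum d (i:ℕ) : ℕ) : ℤ)) = 0 := by ring
      rw [hz, zpow_zero, mul_one]
    rw [conv]
    rw [Finset.sum_congr rfl (fun i _ => this i)]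
    simp [evec, Finset.card_univ]
  · -- q ≠ 0
    haveI := Fact.mk hd
    rcases hodd with ⟨r, hr⟩
    have h2ne : (2 : ZMod d) ≠ 0 := by
      have h3 : 3 ≤ d := by
        have := hd.two_le
        omega
      intro h
      rw [show (2 : ZMod d) = ((2:ℕ) : ZMod d) by push_cast; ring,
        ZMod.natCast_eq_zero_iff] at h
      have := Nat.le_of_dvd (by norm_num) h
      omega
    set c : ℤ := ((r+1 : ℕ) : ℤ) * (-(2*t*(q:ℕ)) - k*(q:ℕ) - k*(q:ℕ)*(q:ℕ)) with hc
    have hm : (2 : ZMod d) * ((r : ZMod d) + 1) = 1 := by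
      have hnat : 2 * (r+1) = d + 1 := by omega
      have h5 : ((2 * (r+1) : ℕ) : ZMod d) = ((d + 1 : ℕ) : ZMod d) := by rw [hnat]
      push_cast [ZMod.natCast_self] at h5
      linear_combination h5
    have hcong : ∀ i : Fin d,
        omega d ^ (((t*(d - (i:ℕ)) : ℕ) : ℤ)
            + ((k * alphaSum d (((i - q : Fin d)):ℕ) : ℕ) : ℤ)
            - ((t*(d - (((i - q : Fin d)):ℕ)) : ℕ) : ℤ)
            - ((k * alphaSum d (i:ℕ) : ℕ) : ℤ))
          = omega d ^ (c + (k*(q:ℕ)*(i:ℕ) : ℕ)) := by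
      intro i
      apply omega_zpow_congr
      apply mul_left_cancel₀ h2ne
      have hb : ((((i - q : Fin d)):ℕ) : ZMod d) = ((i:ℕ) : ZMod d) - ((q:ℕ) : ZMod d) :=
        fin_sub_cast d i q
      have ha1 := alphaSum_zmod d (i:ℕ) (le_of_lt i.isLt)
      have ha2 := alphaSum_zmod d (((i - q : Fin d)):ℕ) (le_of_lt (Fin.isLt _))
      rw [hb] at ha2
      have hsub1 : ((d - (i:ℕ) : ℕ) : ZMod d) = ((d:ℕ):ZMod d) - ((i:ℕ) : ZMod d) :=
        Nat.cast_sub (le_of_lt i.isLt)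
      have hsub2 : ((d - (((i - q : Fin d)):ℕ) : ℕ) : ZMod d)
          = ((d:ℕ):ZMod d) - ((((i - q : Fin d)):ℕ) : ZMod d) :=
        Nat.cast_sub (le_of_lt (Fin.isLt _))
      rw [hc]
      push_cast [hsub1, hsub2, hb, ZMod.natCast_self, Int.cast_natCast, -Int.natCast_div]
      linear_combination ((k:ZMod d)) * ha2 - ((k:ZMod d)) * ha1
        + ((2*(t:ZMod d)*((q:ℕ):ZMod d)) + (k:ZMod d)*((q:ℕ):ZMod d) + (k:ZMod d)*((q:ℕ):ZMod d)*((q:ℕ):ZMod d)) * hm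
    -- geometric sum vanishes
    have hx1 : omega d ^ (k * (q:ℕ)) ≠ 1 := by
      intro hone
      have hdvd := ((omega_prim d).pow_eq_one_iff_dvd _).mp hone
      rcases (Nat.Prime.dvd_mul hd).mp hdvd with h | h
      · have := Nat.le_of_dvd (by omega) h
        omega
      · have hqv : (q:ℕ) ≠ 0 := fun h0 => hq (Fin.ext h0)
        have := Nat.le_of_dvd (Nat.pos_of_ne_zero hqv) h
        have := q.isLt
        omega
    have hgeom : ∑ n ∈ Finset.range d, (omega d ^ (k * (q:ℕ)))^n = 0 := by
      rw [geom_sum_eq hx1]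
      rw [← pow_mul, mul_comm (k * (q:ℕ)) d, pow_mul, omega_pow_d, one_pow]
      simp
    rw [conv]
    rw [Finset.sum_congr rfl (fun i _ => (hterm i).trans (by rw [hcong i]))]
    have hsplit : ∀ i : Fin d, (1/(d:ℂ)) * omega d ^ (c + (k*(q:ℕ)*(i:ℕ) : ℕ))
        = ((1/(d:ℂ)) * omega d ^ c) * (omega d ^ (k*(q:ℕ)))^(i:ℕ) := by
      intro i
      rw [zpow_add₀ hζ0, zpow_natCast, pow_mul]
      ring
    rw [Finset.sum_congr rfl (fun i _ => hsplit i), ← Finset.mul_sum]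
    rw [Fin.sum_univ_eq_sum_range (fun n => (omega d ^ (k*(q:ℕ)))^n) d, hgeom, mul_zero]
    simp [evec, hq]

/-- For odd prime `d` and `1 ≤ k ≤ d−1`, `0 ≤ t ≤ d−1`,
`|γ_t^{(k)}⟩ ∙ (|γ_t^{(k)}⟩)† = |0⟩`, i.e. the corresponding operator
`Z_t^{(k)} = (1/√d) Σ_h γ^{t(d−h)} γ^{−k α_h} Z^h` is unitary. -/
theorem gvec_unitary (d : ℕ) [NeZero d] (hd : d.Prime) (hodd : Odd d)
    (k t : ℕ) (hk1 : 1 ≤ k) (hk2 : k ≤ d - 1) (ht : t ≤ d - 1) :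
    conv d (gvec d k t) (dagVec d (gvec d k t)) = evec d ∧
    Gmap d (gvec d k t) ∈ Matrix.unitaryGroup (Fin d) ℂ := by
  have h1 := conv_gvec d hd hodd k t hk1 hk2
  refine ⟨h1, ?_⟩
  rw [Matrix.mem_unitaryGroup_iff, Gmap_eq_diagonal, Matrix.star_eq_conjTranspose,
    Matrix.diagonal_conjTranspose, Matrix.diagonal_mul_diagonal]
  have hfun : (fun i => Fdft d (gvec d k t) i * star (Fdft d (gvec d k t)) i) = fun _ : Fin d => (1:ℂ) := by
    funext j
    have h2 := Fdft_conv d (gvec d k t) (dagVec d (gvec d k t)) j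
    rw [h1] at h2
    have he : Fdft d (evec d) j = 1 := by simp [Fdft, evec]
    rw [Pi.star_apply, ← starRingEnd_apply, ← Fdft_dagVec d (gvec d k t) j,
      ← h2, he]
  rw [hfun]
  exact Matrix.diagonal_one
end

section
/- Let d be an odd prime and γ = exp(2πi/d). The d−1 unitary bases B_k = {Z_t^{(k)} : t = 0,…,d−1} with Z_t^{(k)} = (1/√d) Σ_{h=0}^{d−1} γ^{t(d−h)} γ^{−k α_h} Z^h (k = 1,…,d−1), together with B_0 = {I, Z, …, Z^{d−1}}, form d bases of the d-dimensional subspace span{Z^0,…,Z^{d−1}} of M(d,ℂ) that are pairwise mutually unbiased: for any two distinct bases, |Tr(A†B)| is a nonzero constant for all elements A, B from the two bases. -/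
open Matrix Complex

/-- The `t`-th element of the `k`-th basis: `B_0 = {Z^t}` and, for `k ≠ 0`,
`Z_t^{(k)} = (1/√d) Σ_{h=0}^{d−1} γ^{t(d−h)} γ^{−k α_h} Z^h`. -/
noncomputable def basOp (d k t : ℕ) : Matrix (Fin d) (Fin d) ℂ :=
  if k = 0 then Zmat d ^ t
  else ∑ h ∈ Finset.range d,
    ((1 / (Real.sqrt d : ℂ)) * omega d ^ (t * (d - h)) * (omega d ^ (k * alphaSum d h))⁻¹)
      • Zmat d ^ h

namespace MUBaux

variable {d : ℕ}

noncomputable def psi (d : ℕ) (x : ZMod d) : ℂ := omega d ^ x.val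

lemma homega (hd : d ≠ 0) : IsPrimitiveRoot (omega d) d :=
  Complex.isPrimitiveRoot_exp d hd

lemma omega_pow_d (hd : d ≠ 0) : omega d ^ d = 1 := (homega hd).pow_eq_one

lemma psi_natCast (hd : d ≠ 0) (n : ℕ) : psi d (n : ZMod d) = omega d ^ n := by
  haveI : NeZero d := ⟨hd⟩
  rw [psi, ZMod.val_natCast]
  conv_rhs => rw [← Nat.mod_add_div n d]
  rw [pow_add, pow_mul, omega_pow_d hd, one_pow, mul_one]

lemma psi_add (hd : d ≠ 0) (x y : ZMod d) : psi d (x + y) = psi d x * psi d y := by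
  haveI : NeZero d := ⟨hd⟩
  have hx : ((x.val : ℕ) : ZMod d) = x := ZMod.natCast_rightInverse x
  have hy : ((y.val : ℕ) : ZMod d) = y := ZMod.natCast_rightInverse y
  rw [← hx, ← hy, ← Nat.cast_add, psi_natCast hd, psi_natCast hd, psi_natCast hd, pow_add]

lemma norm_psi (hd : d ≠ 0) (x : ZMod d) : ‖psi d x‖ = 1 := by
  rw [psi, norm_pow, Complex.norm_eq_one_of_pow_eq_one (omega_pow_d hd) hd, one_pow]

lemma psi_zero (hd : d ≠ 0) : psi d 0 = 1 := by
  haveI : NeZero d := ⟨hd⟩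
  simp [psi]

lemma psi_mul_neg (hd : d ≠ 0) (x : ZMod d) : psi d x * psi d (-x) = 1 := by
  rw [← psi_add hd, add_neg_cancel, psi_zero hd]

lemma inv_psi (hd : d ≠ 0) (x : ZMod d) : (psi d x)⁻¹ = psi d (-x) :=
  inv_eq_of_mul_eq_one_right (psi_mul_neg hd x)

lemma star_psi (hd : d ≠ 0) (x : ZMod d) : star (psi d x) = psi d (-x) := by
  rw [← inv_psi hd, Complex.star_def, ← Complex.inv_eq_conj (norm_psi hd x)]

lemma sum_range_psi [NeZero d] (f : ZMod d → ℂ) :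
    ∑ h ∈ Finset.range d, f (h : ZMod d) = ∑ x : ZMod d, f x := by
  apply Finset.sum_bij' (fun (h : ℕ) (_ : h ∈ Finset.range d) => ((h : ZMod d)))
      (fun (x : ZMod d) (_ : x ∈ Finset.univ) => x.val)
  · intro a ha; exact Finset.mem_univ _
  · intro x _; exact Finset.mem_range.mpr (ZMod.val_lt x)
  · intro a ha; exact ZMod.val_cast_of_lt (Finset.mem_range.mp ha)
  · intro x _; exact ZMod.natCast_rightInverse x
  · intro a ha; rfl

lemma sum_psi_all (hd : d.Prime) : haveI : NeZero d := ⟨hd.ne_zero⟩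
    ∑ x : ZMod d, psi d x = 0 := by
  haveI : NeZero d := ⟨hd.ne_zero⟩
  have hdz : d ≠ 0 := hd.ne_zero
  rw [← sum_range_psi]
  have h1 : ∑ h ∈ Finset.range d, psi d (h : ZMod d) = ∑ h ∈ Finset.range d, omega d ^ h :=
    Finset.sum_congr rfl fun h _ => psi_natCast hdz h
  rw [h1, geom_sum_eq ((homega hdz).ne_one hd.one_lt), omega_pow_d hdz, sub_self, zero_div]

lemma sum_psi_mul (hd : d.Prime) (c : ZMod d) : haveI : NeZero d := ⟨hd.ne_zero⟩
    ∑ x : ZMod d, psi d (c * x) = if c = 0 then (d : ℂ) else 0 := by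
  haveI : NeZero d := ⟨hd.ne_zero⟩
  haveI : Fact d.Prime := ⟨hd⟩
  split_ifs with hc
  · subst hc
    simp [psi_zero hd.ne_zero, ZMod.card]
  · have h2 := Equiv.sum_comp (Equiv.mulLeft₀ c hc) (psi d)
    simp only [Equiv.mulLeft₀_apply] at h2
    rw [h2]
    simpa using sum_psi_all hd

end MUBaux

namespace MUBaux

variable {d : ℕ}

lemma gsum (n : ℕ) : (∑ i ∈ Finset.range n, i) * 2 + n = n * n := by
  induction n with
  | zero => simp
  | succ m ih =>
    rw [Finset.sum_range_succ]
    nlinarith [ih]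

lemma alphaSum_nat {h : ℕ} (hh : h ≤ d) :
    alphaSum d h * 2 + h * h = d * d - d + h := by
  have h1 : (∑ i ∈ Finset.range h, i) + alphaSum d h = ∑ i ∈ Finset.range d, i := by
    simp only [alphaSum, Finset.range_eq_Ico]
    rw [Finset.sum_Ico_consecutive _ (Nat.zero_le h) hh]
  have h2 := gsum h
  have h3 := gsum d
  omega

lemma two_ne_zero' (hd : d.Prime) (hodd : Odd d) : (2 : ZMod d) ≠ 0 := by
  haveI : NeZero d := ⟨hd.ne_zero⟩
  intro h2
  have : ((2 : ℕ) : ZMod d) = 0 := by exact_mod_cast h2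
  rw [ZMod.natCast_eq_zero_iff] at this
  have := (Nat.prime_dvd_prime_iff_eq hd Nat.prime_two).mp this
  rw [this] at hodd
  exact (Nat.not_odd_iff_even.mpr (by norm_num)) hodd

lemma alphaSum_cast (hd : d.Prime) (hodd : Odd d) {h : ℕ} (hh : h ≤ d) :
    ((alphaSum d h : ℕ) : ZMod d) =
      (2 : ZMod d)⁻¹ * ((h : ZMod d) - (h : ZMod d) ^ 2) := by
  haveI : Fact d.Prime := ⟨hd⟩
  have key : ((alphaSum d h * 2 + h * h : ℕ) : ZMod d) = ((d * d - d + h : ℕ) : ZMod d) := by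
    rw [alphaSum_nat hh]
  have hsub : d * d - d + h = d * (d - 1) + h := by
    rcases Nat.eq_zero_or_pos d with h0 | h0
    · simp [h0]
    · cases' d with n
      · omega
      · have : (n+1) * ((n+1) - 1) = (n+1)*(n+1) - (n+1) := by
          simp only [Nat.add_sub_cancel]
          ring_nf
          omega
        omega
  rw [hsub] at key
  push_cast at key
  rw [ZMod.natCast_self] at key
  -- key : α * 2 + h * h = 0 * (d-1) + h
  have h2 : (2 : ZMod d) ≠ 0 := two_ne_zero' hd hodd
  field_simp
  linear_combination key

end MUBaux

namespace MUBaux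

variable {d : ℕ}

lemma psi_sub (hd : d ≠ 0) (x y : ZMod d) : psi d (x - y) = psi d x * psi d (-y) := by
  rw [sub_eq_add_neg, psi_add hd]

lemma gauss_key (hd : d.Prime) (hodd : Odd d) {a : ZMod d} (b : ZMod d) (ha : a ≠ 0) :
    haveI : NeZero d := ⟨hd.ne_zero⟩
    (∑ x : ZMod d, psi d (a * x ^ 2 + b * x)) *
      star (∑ x : ZMod d, psi d (a * x ^ 2 + b * x)) = (d : ℂ) := by
  haveI : NeZero d := ⟨hd.ne_zero⟩
  haveI : Fact d.Prime := ⟨hd⟩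
  have hdz : d ≠ 0 := hd.ne_zero
  have h2 : (2 : ZMod d) ≠ 0 := two_ne_zero' hd hodd
  rw [star_sum]
  rw [Finset.sum_mul_sum]
  -- ∑ y ∑ x ψ(ay²+by) * star ψ(ax²+bx)
  have step1 : ∀ y x : ZMod d,
      psi d (a * y ^ 2 + b * y) * star (psi d (a * x ^ 2 + b * x)) =
      psi d ((a * y ^ 2 + b * y) - (a * x ^ 2 + b * x)) := by
    intro y x
    rw [star_psi hdz, psi_sub hdz]
  simp_rw [step1]
  -- reindex inner sum x := y + m
  have step2 : ∀ y : ZMod d,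
      (∑ x : ZMod d, psi d ((a * y ^ 2 + b * y) - (a * x ^ 2 + b * x))) =
      ∑ m : ZMod d, psi d (-(2 * a * y) * m + (-(a * m ^ 2 + b * m))) := by
    intro y
    rw [← Equiv.sum_comp (Equiv.addLeft y)
      (fun x => psi d ((a * y ^ 2 + b * y) - (a * x ^ 2 + b * x)))]
    apply Finset.sum_congr rfl
    intro m _
    congr 1
    simp only [Equiv.coe_addLeft]
    ring
  simp_rw [step2]
  have step3 : ∀ y m : ZMod d,
      psi d (-(2 * a * y) * m + (-(a * m ^ 2 + b * m))) =
      psi d (-(2 * a * m) * y) * psi d (-(a * m ^ 2 + b * m)) := by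
    intro y m
    rw [← psi_add hdz]
    congr 1
    ring
  simp_rw [step3]
  rw [Finset.sum_comm]
  have step4 : ∀ m : ZMod d,
      (∑ y : ZMod d, psi d (-(2 * a * m) * y) * psi d (-(a * m ^ 2 + b * m))) =
      (if -(2 * a * m) = 0 then (d : ℂ) else 0) * psi d (-(a * m ^ 2 + b * m)) := by
    intro m
    rw [← Finset.sum_mul, sum_psi_mul hd]
  simp_rw [step4]
  have step5 : ∀ m : ZMod d, ((-(2 * a * m) = 0) ↔ (m = 0)) := by
    intro m
    constructor
    · intro hm
      rcases mul_eq_zero.mp (neg_eq_zero.mp hm) with h | h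
      · exact absurd h (mul_ne_zero h2 ha)
      · exact h
    · intro hm; rw [hm, mul_zero, neg_zero]
  rw [Fintype.sum_eq_single (0 : ZMod d)]
  · simp [psi_zero hdz]
  · intro m hm
    rw [if_neg (fun hc => hm ((step5 m).mp hc))]
    ring
  done

lemma gauss_norm_sq (hd : d.Prime) (hodd : Odd d) {a : ZMod d} (b : ZMod d) (ha : a ≠ 0) :
    haveI : NeZero d := ⟨hd.ne_zero⟩
    ‖∑ x : ZMod d, psi d (a * x ^ 2 + b * x)‖ ^ 2 = (d : ℝ) := by
  haveI : NeZero d := ⟨hd.ne_zero⟩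
  have key := gauss_key hd hodd b ha
  set S := ∑ x : ZMod d, psi d (a * x ^ 2 + b * x) with hS
  have h1 : S * star S = ((Complex.normSq S : ℝ) : ℂ) := by
    rw [Complex.star_def, Complex.mul_conj]
  rw [h1] at key
  have h2 : (Complex.normSq S : ℝ) = (d : ℝ) := by
    exact_mod_cast key
  rw [← h2, Complex.sq_norm]

end MUBaux

namespace MUBaux

variable {d : ℕ}

noncomputable def coef (d k t h : ℕ) : ℂ :=
  (1 / (Real.sqrt d : ℂ)) * omega d ^ (t * (d - h)) * (omega d ^ (k * alphaSum d h))⁻¹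

lemma basOp_ne {k t : ℕ} (hk : k ≠ 0) :
    basOp d k t = ∑ h ∈ Finset.range d, coef d k t h • Zmat d ^ h := by
  rw [basOp, if_neg hk]
  rfl

lemma Zpow (h : ℕ) : Zmat d ^ h = Matrix.diagonal (fun j : Fin d => omega d ^ ((j : ℕ) * h)) := by
  rw [Zmat, Matrix.diagonal_pow]
  refine congrArg Matrix.diagonal ?_
  funext j
  rw [Pi.pow_apply, ← pow_mul]

lemma trace_Zpow (hd : d.Prime) (a b : ℕ) :
    Matrix.trace ((Zmat d ^ a)ᴴ * (Zmat d ^ b)) =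
      if (a : ZMod d) = (b : ZMod d) then (d : ℂ) else 0 := by
  haveI : NeZero d := ⟨hd.ne_zero⟩
  have hdz : d ≠ 0 := hd.ne_zero
  rw [Zpow, Zpow, Matrix.diagonal_conjTranspose, Matrix.diagonal_mul_diagonal,
    Matrix.trace_diagonal]
  simp only [Pi.mul_apply, Pi.star_apply]
  have step : ∀ j : Fin d,
      star (omega d ^ ((j : ℕ) * a)) * omega d ^ ((j : ℕ) * b)
        = psi d (((b : ZMod d) - (a : ZMod d)) * ((j : ℕ) : ZMod d)) := by
    intro j
    rw [← psi_natCast hdz, ← psi_natCast hdz, star_psi hdz, ← psi_add hdz]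
    congr 1
    push_cast
    ring
  rw [Finset.sum_congr rfl (fun j _ => step j)]
  have conv1 : ∑ j : Fin d, psi d (((b : ZMod d) - (a : ZMod d)) * ((j : ℕ) : ZMod d))
      = ∑ h ∈ Finset.range d, psi d (((b : ZMod d) - (a : ZMod d)) * ((h : ℕ) : ZMod d)) :=
    Fin.sum_univ_eq_sum_range (fun n => psi d (((b : ZMod d) - (a : ZMod d)) * ((n : ℕ) : ZMod d))) d
  rw [conv1, sum_range_psi (f := fun x => psi d (((b : ZMod d) - (a : ZMod d)) * x)),
    sum_psi_mul hd]
  by_cases hab : (a : ZMod d) = (b : ZMod d)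
  · rw [if_pos hab, if_pos (by rw [hab, sub_self])]
  · rw [if_neg hab, if_neg (fun hc => hab (by linear_combination -hc))]

/-- trace of product of two coefficient combinations of `Z` powers. -/
lemma trace_comb (hd : d.Prime) (u v : ℕ → ℂ) :
    Matrix.trace ((∑ h ∈ Finset.range d, u h • Zmat d ^ h)ᴴ *
        (∑ h ∈ Finset.range d, v h • Zmat d ^ h)) =
      (d : ℂ) * ∑ h ∈ Finset.range d, star (u h) * v h := by
  haveI : NeZero d := ⟨hd.ne_zero⟩
  rw [Matrix.conjTranspose_sum]
  simp only [Matrix.conjTranspose_smul]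
  rw [Matrix.sum_mul]
  simp only [Matrix.smul_mul]
  rw [Matrix.trace_sum]
  simp only [Matrix.trace_smul]
  have inner : ∀ h ∈ Finset.range d,
      star (u h) • Matrix.trace ((Zmat d ^ h)ᴴ * ∑ h' ∈ Finset.range d, v h' • Zmat d ^ h')
        = (d : ℂ) * (star (u h) * v h) := by
    intro h hh
    rw [Matrix.mul_sum, Matrix.trace_sum]
    simp only [Matrix.mul_smul, Matrix.trace_smul, trace_Zpow hd]
    rw [Finset.sum_eq_single h]
    · rw [if_pos rfl]
      simp only [smul_eq_mul]
      ring
    · intro h' hh' hne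
      rw [if_neg, smul_zero]
      intro hc
      apply hne
      have e1 : ((h : ZMod d)).val = h := ZMod.val_cast_of_lt (Finset.mem_range.mp hh)
      have e2 : ((h' : ZMod d)).val = h' := ZMod.val_cast_of_lt (Finset.mem_range.mp hh')
      rw [← e2, ← e1, hc]
    · intro hc
      exact absurd hh hc
  rw [Finset.sum_congr rfl inner, ← Finset.mul_sum]

end MUBaux

namespace MUBaux

variable {d : ℕ}

lemma inv_sqrt_sq (hd : d ≠ 0) :
    (1 / (Real.sqrt d : ℂ)) * (1 / (Real.sqrt d : ℂ)) = 1 / (d : ℂ) := by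
  rw [div_mul_div_comm, one_mul, ← Complex.ofReal_mul, Real.mul_self_sqrt (Nat.cast_nonneg d)]
  norm_num

lemma coef_psi (hd : d ≠ 0) {h : ℕ} (hh : h ≤ d) (k t : ℕ) :
    coef d k t h =
      (1 / (Real.sqrt d : ℂ)) *
        psi d (-((t : ZMod d) * (h : ZMod d)) - (k : ZMod d) * ((alphaSum d h : ℕ) : ZMod d)) := by
  haveI : NeZero d := ⟨hd⟩
  rw [coef, ← psi_natCast hd (t * (d - h)), ← psi_natCast hd (k * alphaSum d h), inv_psi hd,
    mul_assoc, ← psi_add hd]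
  congr 1
  push_cast [Nat.cast_sub hh]
  rw [ZMod.natCast_self]
  ring

lemma star_inv_sqrt : star (1 / (Real.sqrt d : ℂ)) = 1 / (Real.sqrt d : ℂ) := by
  rw [Complex.star_def, map_div₀, _root_.map_one, Complex.conj_ofReal]

lemma star_coef (hd : d ≠ 0) {h : ℕ} (hh : h ≤ d) (k t : ℕ) :
    star (coef d k t h) =
      (1 / (Real.sqrt d : ℂ)) *
        psi d ((t : ZMod d) * (h : ZMod d) + (k : ZMod d) * ((alphaSum d h : ℕ) : ZMod d)) := by
  rw [coef_psi hd hh, star_mul', star_inv_sqrt, star_psi hd]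
  congr 1
  ring

lemma prod_coef (hd : d ≠ 0) {h : ℕ} (hh : h ≤ d) (k t k' t' : ℕ) :
    star (coef d k t h) * coef d k' t' h =
      (1 / (d : ℂ)) *
        psi d (((t : ZMod d) - (t' : ZMod d)) * (h : ZMod d) +
          ((k : ZMod d) - (k' : ZMod d)) * ((alphaSum d h : ℕ) : ZMod d)) := by
  rw [star_coef hd hh, coef_psi hd hh, mul_mul_mul_comm, inv_sqrt_sq hd, ← psi_add hd]
  congr 1
  ring

lemma norm_coef (hd : d ≠ 0) (k t h : ℕ) : ‖coef d k t h‖ = 1 / Real.sqrt d := by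
  rw [coef]
  rw [norm_mul, norm_mul, norm_inv]
  have h1 : ‖(1 / (Real.sqrt d : ℂ))‖ = 1 / Real.sqrt d := by
    rw [norm_div, norm_one, Complex.norm_real, Real.norm_eq_abs,
      _root_.abs_of_nonneg (Real.sqrt_nonneg _)]
  have h2 : ∀ n : ℕ, ‖omega d ^ n‖ = 1 := fun n => by
    rw [norm_pow, Complex.norm_eq_one_of_pow_eq_one (omega_pow_d hd) hd, one_pow]
  rw [h1, h2, h2]
  norm_num

lemma basOp_diag {k t : ℕ} (hk : k ≠ 0) :
    basOp d k t = Matrix.diagonal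
      (fun j : Fin d => ∑ h ∈ Finset.range d, coef d k t h * omega d ^ ((j : ℕ) * h)) := by
  rw [basOp_ne hk]
  ext i j
  by_cases hij : i = j
  · subst hij
    simp [Matrix.sum_apply, Zpow, Matrix.diagonal_apply_eq, smul_eq_mul]
  · simp [Matrix.sum_apply, Zpow, Matrix.diagonal_apply_ne _ hij, hij]

lemma cast_ne_zero_of_lt (hd : d.Prime) {k : ℕ} (hk : k ≠ 0) (hklt : k < d) :
    (k : ZMod d) ≠ 0 := by
  haveI : NeZero d := ⟨hd.ne_zero⟩
  intro hc
  apply hk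
  have := ZMod.val_cast_of_lt hklt
  rw [hc, ZMod.val_zero] at this
  omega

lemma entry_val (hd : d.Prime) (hodd : Odd d) {k : ℕ} (t : ℕ) (hk : k ≠ 0) (hklt : k < d)
    (j : Fin d) :
    haveI : NeZero d := ⟨hd.ne_zero⟩
    ∑ h ∈ Finset.range d, coef d k t h * omega d ^ ((j : ℕ) * h) =
      (1 / (Real.sqrt d : ℂ)) *
        ∑ x : ZMod d, psi d ((k : ZMod d) * (2 : ZMod d)⁻¹ * x ^ 2 +
          (((j : ℕ) : ZMod d) - (t : ZMod d) - (k : ZMod d) * (2 : ZMod d)⁻¹) * x) := by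
  haveI : NeZero d := ⟨hd.ne_zero⟩
  have hdz : d ≠ 0 := hd.ne_zero
  have step : ∀ h ∈ Finset.range d,
      coef d k t h * omega d ^ ((j : ℕ) * h) =
      (1 / (Real.sqrt d : ℂ)) *
        psi d ((k : ZMod d) * (2 : ZMod d)⁻¹ * ((h : ℕ) : ZMod d) ^ 2 +
          (((j : ℕ) : ZMod d) - (t : ZMod d) - (k : ZMod d) * (2 : ZMod d)⁻¹) * ((h : ℕ) : ZMod d)) := by
    intro h hh
    have hhd : h ≤ d := le_of_lt (Finset.mem_range.mp hh)
    rw [coef_psi hdz hhd, ← psi_natCast hdz ((j : ℕ) * h), mul_assoc, ← psi_add hdz]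
    congr 1
    rw [alphaSum_cast hd hodd hhd]
    push_cast
    ring
  rw [Finset.sum_congr rfl step, ← Finset.mul_sum]
  congr 1
  exact sum_range_psi (f := fun x => psi d ((k : ZMod d) * (2 : ZMod d)⁻¹ * x ^ 2 +
    (((j : ℕ) : ZMod d) - (t : ZMod d) - (k : ZMod d) * (2 : ZMod d)⁻¹) * x))

lemma diag_unitary (v : Fin d → ℂ) (hv : ∀ j, ‖v j‖ = 1) :
    Matrix.diagonal v ∈ Matrix.unitaryGroup (Fin d) ℂ := by
  rw [Matrix.mem_unitaryGroup_iff']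
  rw [Matrix.star_eq_conjTranspose, Matrix.diagonal_conjTranspose, Matrix.diagonal_mul_diagonal,
    ← Matrix.diagonal_one]
  refine congrArg Matrix.diagonal ?_
  funext j
  have h1 : star (v j) * v j = ((‖v j‖ ^ 2 : ℝ) : ℂ) := by
    rw [Complex.star_def, mul_comm, Complex.mul_conj, Complex.normSq_eq_norm_sq]
  simp only [Pi.mul_apply, Pi.star_apply, Pi.one_apply]
  rw [h1, hv j]
  norm_num

end MUBaux

namespace MUBaux

variable {d : ℕ}

lemma basOp_zero (t : ℕ) : basOp d 0 t = Zmat d ^ t := by simp [basOp]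

lemma Zpow_sum {t : ℕ} (ht : t < d) :
    Zmat d ^ t = ∑ h ∈ Finset.range d, (if h = t then (1 : ℂ) else 0) • Zmat d ^ h := by
  have e : ∀ h ∈ Finset.range d,
      (if h = t then (1 : ℂ) else 0) • Zmat d ^ h = if h = t then Zmat d ^ h else 0 := by
    intro h _; split_ifs <;> simp
  rw [Finset.sum_congr rfl e, Finset.sum_ite_eq' (Finset.range d) t (fun h => Zmat d ^ h),
    if_pos (Finset.mem_range.mpr ht)]

lemma cast_inj_lt {m n : ℕ} (hd : d ≠ 0) (hm : m < d) (hn : n < d)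
    (h : (m : ZMod d) = (n : ZMod d)) : m = n := by
  haveI : NeZero d := ⟨hd⟩
  rw [← ZMod.val_cast_of_lt hm, ← ZMod.val_cast_of_lt hn, h]

lemma norm_aux (hd : d ≠ 0) (z : ℂ) (hz : ‖z‖ = 1 / Real.sqrt d) :
    ‖(d : ℂ) * z‖ ^ 2 = d := by
  have hd0 : (0 : ℝ) < d := by positivity
  rw [norm_mul, mul_pow, Complex.norm_natCast, hz, div_pow, one_pow,
    Real.sq_sqrt (le_of_lt hd0)]
  field_simp

end MUBaux

open MUBaux

/-- For an odd prime `d`, the `d` bases `B_0 = {I, Z, …, Z^{d−1}}` and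
`B_k = {Z_t^{(k)} : t = 0,…,d−1}` (`k = 1,…,d−1`) of `span{Z^0,…,Z^{d−1}}` consist of
unitaries, are orthogonal bases, and are pairwise mutually unbiased: for any two distinct
bases there is a nonzero constant `C` with `|Tr(A†B)|² = C` for all cross pairs. -/
theorem d_muubs_for_subspace (d : ℕ) (hd : d.Prime) (hodd : Odd d) :
    (∀ k t : ℕ, k ≤ d - 1 → t ≤ d - 1 →
      basOp d k t ∈ Matrix.unitaryGroup (Fin d) ℂ) ∧
    (∀ k t t' : ℕ, k ≤ d - 1 → t ≤ d - 1 → t' ≤ d - 1 → t ≠ t' →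
      Matrix.trace ((basOp d k t)ᴴ * basOp d k t') = 0) ∧
    (∀ k k' : ℕ, k ≤ d - 1 → k' ≤ d - 1 → k ≠ k' →
      ∃ C : ℝ, C ≠ 0 ∧ ∀ t t' : ℕ, t ≤ d - 1 → t' ≤ d - 1 →
        ‖Matrix.trace ((basOp d k t)ᴴ * basOp d k' t')‖ ^ 2 = C) := by
  haveI : Fact d.Prime := ⟨hd⟩
  haveI : NeZero d := ⟨hd.ne_zero⟩
  have hdz : d ≠ 0 := hd.ne_zero
  have hdpos : 0 < d := hd.pos
  have hlt : ∀ {m : ℕ}, m ≤ d - 1 → m < d := fun {m} hm => by omega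
  have h2z : (2 : ZMod d) ≠ 0 := two_ne_zero' hd hodd
  have hi2 : ((2 : ZMod d))⁻¹ ≠ 0 := inv_ne_zero h2z
  have hsq : Real.sqrt d ≠ 0 := by positivity
  have homega_norm : ∀ n : ℕ, ‖omega d ^ n‖ = 1 := fun n => by
    rw [norm_pow, Complex.norm_eq_one_of_pow_eq_one (omega_pow_d hdz) hdz, one_pow]
  refine ⟨?_, ?_, ?_⟩
  · -- unitarity
    intro k t hk ht
    by_cases hk0 : k = 0
    · subst hk0
      rw [basOp_zero, Zpow]
      exact diag_unitary _ (fun j => homega_norm _)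
    · rw [basOp_diag hk0]
      apply diag_unitary
      intro j
      rw [entry_val hd hodd t hk0 (hlt hk) j]
      have hA : (k : ZMod d) * (2 : ZMod d)⁻¹ ≠ 0 :=
        mul_ne_zero (cast_ne_zero_of_lt hd hk0 (hlt hk)) hi2
      have hS := gauss_norm_sq hd hodd
        (((j : ℕ) : ZMod d) - (t : ZMod d) - (k : ZMod d) * (2 : ZMod d)⁻¹) hA
      have hSn : ‖∑ x : ZMod d, psi d ((k : ZMod d) * (2 : ZMod d)⁻¹ * x ^ 2 +
          (((j : ℕ) : ZMod d) - (t : ZMod d) - (k : ZMod d) * (2 : ZMod d)⁻¹) * x)‖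
          = Real.sqrt d := by
        rw [← Real.sqrt_sq (norm_nonneg _), hS]
      rw [norm_mul, hSn]
      have h1 : ‖(1 / (Real.sqrt d : ℂ))‖ = 1 / Real.sqrt d := by
        rw [norm_div, norm_one, Complex.norm_real, Real.norm_eq_abs,
          _root_.abs_of_nonneg (Real.sqrt_nonneg _)]
      rw [h1, one_div, inv_mul_cancel₀ hsq]
  · -- orthogonality within a basis
    intro k t t' hk ht ht' htne
    have hcast : ((t : ZMod d)) ≠ (t' : ZMod d) :=
      fun hc => htne (cast_inj_lt hdz (hlt ht) (hlt ht') hc)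
    by_cases hk0 : k = 0
    · subst hk0
      rw [basOp_zero, basOp_zero, trace_Zpow hd, if_neg hcast]
    · rw [basOp_ne hk0, basOp_ne hk0, trace_comb hd]
      have e1 : ∀ h ∈ Finset.range d,
          star (coef d k t h) * coef d k t' h =
            (1 / (d : ℂ)) * psi d (((t : ZMod d) - (t' : ZMod d)) * ((h : ℕ) : ZMod d)) := by
        intro h hh
        rw [prod_coef hdz (le_of_lt (Finset.mem_range.mp hh))]
        congr 1
        rw [sub_self, zero_mul, add_zero]
      rw [Finset.sum_congr rfl e1, ← Finset.mul_sum,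
        sum_range_psi (f := fun x => psi d (((t : ZMod d) - (t' : ZMod d)) * x)),
        sum_psi_mul hd, if_neg (fun hc => hcast (by linear_combination hc))]
      simp
  · -- mutual unbiasedness
    intro k k' hk hk' hkk'
    refine ⟨d, Nat.cast_ne_zero.mpr hdz, ?_⟩
    intro t t' ht ht'
    by_cases hk0 : k = 0
    · -- k = 0, k' ≠ 0
      have hk'0 : k' ≠ 0 := fun hc => hkk' (by rw [hk0, hc])
      subst hk0
      rw [basOp_zero, Zpow_sum (hlt ht), basOp_ne hk'0, trace_comb hd]
      have e1 : ∑ h ∈ Finset.range d,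
          star (if h = t then (1 : ℂ) else 0) * coef d k' t' h = coef d k' t' t := by
        rw [Finset.sum_eq_single t]
        · rw [if_pos rfl, star_one, one_mul]
        · intro h _ hne
          rw [if_neg hne, star_zero, zero_mul]
        · intro hc
          exact absurd (Finset.mem_range.mpr (hlt ht)) hc
      rw [e1]
      exact norm_aux hdz _ (norm_coef hdz _ _ _)
    · by_cases hk'0 : k' = 0
      · -- k ≠ 0, k' = 0
        subst hk'0
        rw [basOp_zero, Zpow_sum (hlt ht'), basOp_ne hk0, trace_comb hd]
        have e1 : ∑ h ∈ Finset.range d,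
            star (coef d k t h) * (if h = t' then (1 : ℂ) else 0) = star (coef d k t t') := by
          rw [Finset.sum_eq_single t']
          · rw [if_pos rfl, mul_one]
          · intro h _ hne
            rw [if_neg hne, mul_zero]
          · intro hc
            exact absurd (Finset.mem_range.mpr (hlt ht')) hc
        rw [e1]
        refine norm_aux hdz _ ?_
        rw [norm_star]
        exact norm_coef hdz _ _ _
      · -- both nonzero
        have hkcast : ((k' : ZMod d)) ≠ (k : ZMod d) :=
          fun hc => hkk' (cast_inj_lt hdz (hlt hk) (hlt hk') hc.symm)
        have hA : (((k' : ZMod d)) - (k : ZMod d)) * (2 : ZMod d)⁻¹ ≠ 0 :=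
          mul_ne_zero (sub_ne_zero.mpr hkcast) hi2
        set A := (((k' : ZMod d)) - (k : ZMod d)) * (2 : ZMod d)⁻¹ with hAdef
        set B := ((t : ZMod d) - (t' : ZMod d)) +
          ((k : ZMod d) - (k' : ZMod d)) * (2 : ZMod d)⁻¹ with hBdef
        rw [basOp_ne hk0, basOp_ne hk'0, trace_comb hd]
        have e1 : ∀ h ∈ Finset.range d,
            star (coef d k t h) * coef d k' t' h =
              (1 / (d : ℂ)) * psi d (A * ((h : ℕ) : ZMod d) ^ 2 + B * ((h : ℕ) : ZMod d)) := by
          intro h hh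
          have hhd : h ≤ d := le_of_lt (Finset.mem_range.mp hh)
          rw [prod_coef hdz hhd]
          congr 1
          rw [alphaSum_cast hd hodd hhd, hAdef, hBdef]
          ring
        have e2 : (d : ℂ) * ∑ h ∈ Finset.range d, star (coef d k t h) * coef d k' t' h =
            ∑ x : ZMod d, psi d (A * x ^ 2 + B * x) := by
          rw [Finset.sum_congr rfl e1, ← Finset.mul_sum,
            sum_range_psi (f := fun x => psi d (A * x ^ 2 + B * x)), ← mul_assoc,
            mul_one_div, div_self (Nat.cast_ne_zero.mpr hdz), one_mul]
        rw [e2]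
        exact gauss_norm_sq hd hodd B hA
end
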